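/- arXiv:1302.6558 — 3 statements merged into one kernel-verified Lean document; each statement's English description precedes it below -/
import Mathlib

section
/- The map ψ defined on subexcedant sequences of length n by ψ(t_1 t_2 … t_n) = [[n,t_n]]·[[n−1,t_{n−1}]]·…·[[2,t_2]]·[[1,t_1]] is a bijection from the set of subexcedant sequences of length n onto the symmetric group S_n. -/
/-- `rot u k` is the permutation `[[u,k]]` of `{1,…,u} ⊆ ℕ` obtained by `k`
right circular shifts of the first `u` entries of the identity (positions are
1-based; all other natural numbers are fixed): `[[u,k]] i = u - k + i` for
`1 ≤ i ≤ k`, `[[u,k]] i = i - k` for `k < i ≤ u` and `[[u,k]] i = i` for `i > u`.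
It is (junk-)defined as the identity when `¬ k < u`. -/
def rot (u k : ℕ) : Equiv.Perm ℕ :=
  if _h : k < u then
    { toFun := fun i =>
        if 1 ≤ i ∧ i ≤ k then u - k + i
        else if k < i ∧ i ≤ u then i - k
        else i
      invFun := fun j =>
        if u - k + 1 ≤ j ∧ j ≤ u then j - (u - k)
        else if 1 ≤ j ∧ j ≤ u - k then j + k
        else j
      left_inv := by intro i; dsimp only; split_ifs <;> omega
      right_inv := by intro j; dsimp only; split_ifs <;> omega }
  else 1

/-- `psi n t = [[n, t n]] · [[n-1, t (n-1)]] · ⋯ · [[2, t 2]] · [[1, t 1]]`, where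
permutations act on indices, i.e. `(σ * τ) i = σ (τ i)`.  When `t` is a subexcedant
sequence of length `n`, `t` is called the McMahon code of the permutation `psi n t`. -/
def psi (n : ℕ) (t : ℕ → ℕ) : Equiv.Perm ℕ :=
  ((List.range n).reverse.map (fun i => rot (i + 1) (t (i + 1)))).prod

/-- `c` is a subexcedant sequence of length `n`: `0 ≤ c i ≤ i - 1` for `1 ≤ i ≤ n`
(positions are 1-based). -/
def Subexcedant (n : ℕ) (c : ℕ → ℕ) : Prop :=
  ∀ i, 1 ≤ i → i ≤ n → c i ≤ i - 1

/-- The major index of a permutation of `{1,…,n}`: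
`maj π = ∑_{1 ≤ i < n, π i > π (i+1)} i`. -/
def maj (n : ℕ) (π : Equiv.Perm ℕ) : ℕ :=
  ∑ i ∈ Finset.Ico 1 n, if π (i + 1) < π i then i else 0

lemma rot_fix {u k i : ℕ} (h : i = 0 ∨ u < i) : rot u k i = i := by
  unfold rot
  split_ifs with h1
  · simp only [Equiv.coe_fn_mk]
    split_ifs <;> omega
  · rfl

lemma rot_inv_fix {u k i : ℕ} (h : i = 0 ∨ u < i) : (rot u k)⁻¹ i = i := by
  apply (rot u k).injective
  rw [Equiv.Perm.coe_inv, Equiv.apply_symm_apply, rot_fix h]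

lemma rot_top {u k : ℕ} (h : k < u) : rot u k u = u - k := by
  unfold rot
  rw [dif_pos h]
  simp only [Equiv.coe_fn_mk]
  split_ifs <;> omega

lemma psi_succ (n : ℕ) (t : ℕ → ℕ) :
    psi (n + 1) t = rot (n + 1) (t (n + 1)) * psi n t := by
  simp [psi, List.range_succ]

lemma psi_fix (n : ℕ) (t : ℕ → ℕ) {i : ℕ} (h : i = 0 ∨ n < i) : psi n t i = i := by
  induction n with
  | zero => simp [psi]
  | succ m ih =>
    rw [psi_succ, Equiv.Perm.mul_apply, ih (by omega), rot_fix (by omega)]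

lemma psi_congr (n : ℕ) {t s : ℕ → ℕ} (h : ∀ i, 1 ≤ i → i ≤ n → t i = s i) :
    psi n t = psi n s := by
  induction n with
  | zero => rfl
  | succ m ih =>
    rw [psi_succ, psi_succ, h (m + 1) (by omega) le_rfl,
      ih (fun i h1 h2 => h i h1 (by omega))]

lemma psi_top (n : ℕ) {t : ℕ → ℕ} (h : t (n + 1) ≤ n) :
    psi (n + 1) t (n + 1) = n + 1 - t (n + 1) := by
  rw [psi_succ, Equiv.Perm.mul_apply, psi_fix n t (by omega), rot_top (by omega)]

lemma psi_injOn (n : ℕ) : Set.InjOn (psi n)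
    {c : ℕ → ℕ | Subexcedant n c ∧ ∀ i, i = 0 ∨ n < i → c i = 0} := by
  induction n with
  | zero =>
    intro t ht s hs _
    funext i
    rw [ht.2 i (by omega), hs.2 i (by omega)]
  | succ m ih =>
    intro t ht s hs heq
    have htm : t (m + 1) ≤ m := by have := ht.1 (m + 1) (by omega) le_rfl; omega
    have hsm : s (m + 1) ≤ m := by have := hs.1 (m + 1) (by omega) le_rfl; omega
    have htop : t (m + 1) = s (m + 1) := by
      have h1 := psi_top m htm
      have h2 := psi_top m hsm
      rw [heq] at h1
      omega
    have hrest : psi m t = psi m s := by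
      rw [psi_succ, psi_succ, htop] at heq
      exact mul_left_cancel heq
    have h1 : (fun i => if i ≤ m then t i else 0) = (fun i => if i ≤ m then s i else 0) := by
      apply ih
      · refine ⟨fun i hi1 hi2 => ?_, fun i hi => ?_⟩
        · simp only [if_pos hi2]; exact ht.1 i hi1 (by omega)
        · beta_reduce; split_ifs with h
          · exact ht.2 i (by omega)
          · rfl
      · refine ⟨fun i hi1 hi2 => ?_, fun i hi => ?_⟩
        · simp only [if_pos hi2]; exact hs.1 i hi1 (by omega)
        · beta_reduce; split_ifs with h
          · exact hs.2 i (by omega)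
          · rfl
      · calc psi m (fun i => if i ≤ m then t i else 0)
            = psi m t := psi_congr m (fun i _ h2 => by simp [if_pos h2])
          _ = psi m s := hrest
          _ = psi m (fun i => if i ≤ m then s i else 0) :=
              (psi_congr m fun i _ h2 => by simp [if_pos h2]).symm
    funext i
    by_cases hi0 : i = 0
    · rw [ht.2 i (Or.inl hi0), hs.2 i (Or.inl hi0)]
    by_cases him : i ≤ m
    · have := congrFun h1 i
      simpa [if_pos him] using this
    by_cases hi : i = m + 1
    · rw [hi]; exact htop
    · rw [ht.2 i (by omega), hs.2 i (by omega)]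

lemma psi_surjOn (n : ℕ) : Set.SurjOn (psi n)
    {c : ℕ → ℕ | Subexcedant n c ∧ ∀ i, i = 0 ∨ n < i → c i = 0}
    {π : Equiv.Perm ℕ | ∀ i, i = 0 ∨ n < i → π i = i} := by
  induction n with
  | zero =>
    intro π hπ
    refine ⟨fun _ => 0, ⟨fun i _ _ => by omega, fun i _ => rfl⟩, ?_⟩
    have : π = 1 := Equiv.ext fun i => hπ i (by omega)
    rw [this]; rfl
  | succ m ih =>
    intro π hπ
    have h1 : 1 ≤ π (m + 1) := by
      by_contra h
      have h0 : π (m + 1) = 0 := by omega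
      have hz : π 0 = 0 := hπ 0 (Or.inl rfl)
      have := π.injective (h0.trans hz.symm)
      omega
    have h2 : π (m + 1) ≤ m + 1 := by
      by_contra h
      have heq : π (π (m + 1)) = π (m + 1) := hπ _ (by omega)
      have := π.injective heq
      omega
    set k := m + 1 - π (m + 1) with hk
    have hkm : k ≤ m := by omega
    have hσfix : ∀ i, i = 0 ∨ m < i → ((rot (m + 1) k)⁻¹ * π) i = i := by
      intro i hi
      rcases Nat.lt_or_ge (m + 1) i with hgt | hle
      · rw [Equiv.Perm.mul_apply, hπ i (by omega), rot_inv_fix (by omega)]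
      rcases hi with hi | hi
      · rw [Equiv.Perm.mul_apply, hπ i (Or.inl hi), hi, rot_inv_fix (Or.inl rfl)]
      · have hieq : i = m + 1 := by omega
        subst hieq
        rw [Equiv.Perm.mul_apply]
        apply (rot (m + 1) k).injective
        rw [Equiv.Perm.coe_inv, Equiv.apply_symm_apply, rot_top (by omega)]
        omega
    obtain ⟨c, hc, hψ⟩ := ih hσfix
    refine ⟨fun i => if i = m + 1 then k else c i, ⟨fun i hi1 hi2 => ?_, fun i hi => ?_⟩, ?_⟩
    · beta_reduce; split_ifs with h
      · omega
      · have := hc.1 i hi1 (by omega)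
        omega
    · beta_reduce; split_ifs with h
      · omega
      · exact hc.2 i (by omega)
    · have : psi m (fun i => if i = m + 1 then k else c i) = psi m c :=
        psi_congr m (fun i _ h2 => by simp [show i ≠ m + 1 by omega])
      rw [psi_succ, this, if_pos rfl, hψ, ← mul_assoc, mul_inv_cancel, one_mul]

/-- the map `ψ` is a bijection from the set of subexcedant
sequences of length `n` (encoded as functions `ℕ → ℕ` that vanish outside the
positions `1,…,n`) onto the symmetric group `S_n` (encoded as the set of
permutations of `ℕ` fixing every point outside `{1,…,n}`). -/
theorem psi_bijective (n : ℕ) :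
    Set.BijOn (psi n)
      {c : ℕ → ℕ | Subexcedant n c ∧ ∀ i, i = 0 ∨ n < i → c i = 0}
      {π : Equiv.Perm ℕ | ∀ i, i = 0 ∨ n < i → π i = i} := by
  exact ⟨fun c _ i hi => psi_fix n c hi, psi_injOn n, psi_surjOn n⟩
end

section
/- Let n, u, v be integers with n ≥ 3, 0 ≤ u ≤ n−2, and 1 ≤ v ≤ n−2. Define σ = [[n,u]]·[[n−1,v]] and τ = [[n,u+1]]·[[n−1,v−1]] in S_n. Then τ = σ·⟨n,v⟩, where ⟨n,v⟩ is the transposition exchanging n and v. -/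
set_option maxHeartbeats 2000000 in
/-- for `n ≥ 3`, `0 ≤ u ≤ n-2` and `1 ≤ v ≤ n-2`, if
`σ = [[n,u]]·[[n-1,v]]` and `τ = [[n,u+1]]·[[n-1,v-1]]`, then `τ = σ·⟨n,v⟩`
where `⟨n,v⟩` is the transposition exchanging `n` and `v`. -/
theorem rot_succ_mul_rot_pred (n u v : ℕ) (hn : 3 ≤ n)
    (hu : u ≤ n - 2) (hv1 : 1 ≤ v) (hv2 : v ≤ n - 2) :
    rot n (u + 1) * rot (n - 1) (v - 1) =
      (rot n u * rot (n - 1) v) * Equiv.swap n v := by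
  have h1 : u + 1 < n := by omega
  have h2 : v - 1 < n - 1 := by omega
  have h3 : u < n := by omega
  have h4 : v < n - 1 := by omega
  ext i
  simp only [rot, dif_pos h1, dif_pos h2, dif_pos h3, dif_pos h4,
    Equiv.Perm.mul_apply, Equiv.coe_fn_mk, Equiv.swap_apply_def]
  split_ifs <;> omega
end

section
/- Let n and k be integers with 0 < k ≤ n(n−1)/2, let j = min{s : s(s−1)/2 ≥ k}, and let a = a_1 a_2 … a_n be the subexcedant sequence with a_i = i−1 for 1 ≤ i ≤ j−1, a_j = k − (j−1)(j−2)/2, and a_i = 0 for i > j. Then the permutation α = ψ(a) ∈ S_n with McMahon code a is an involution, i.e., α^{−1} = α. -/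
lemma rot_zero (u : ℕ) : rot u 0 = 1 := by
  unfold rot
  split_ifs with h
  · ext i
    simp only [Equiv.coe_fn_mk, Equiv.Perm.coe_one, id_eq]
    split_ifs <;> omega
  · rfl

lemma rot_apply (u k : ℕ) (h : k < u) (i : ℕ) :
    rot u k i = if 1 ≤ i ∧ i ≤ k then u - k + i
      else if k < i ∧ i ≤ u then i - k else i := by
  unfold rot
  rw [dif_pos h]
  rfl

lemma psi_eq_of_zero (a : ℕ → ℕ) (j : ℕ) (h : ∀ i, j < i → a i = 0) :
    ∀ n, j ≤ n → psi n a = psi j a := by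
  intro n hn
  induction n, hn using Nat.le_induction with
  | base => rfl
  | succ n hn ih =>
    rw [psi_succ, h (n + 1) (by omega), rot_zero, one_mul, ih]

lemma psi_rev (a : ℕ → ℕ) (j : ℕ) (ha : ∀ i, 1 ≤ i → i ≤ j → a i = i - 1) :
    ∀ u, u ≤ j → ∀ x, psi u a x = if 1 ≤ x ∧ x ≤ u then u + 1 - x else x := by
  intro u
  induction u with
  | zero =>
    intro _ x
    simp only [psi, List.range_zero, List.reverse_nil, List.map_nil, List.prod_nil,
      Equiv.Perm.coe_one, id_eq]
    rw [if_neg (by omega)]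
  | succ u ih =>
    intro hu x
    rw [psi_succ, Equiv.Perm.mul_apply, ih (by omega) x,
      ha (u + 1) (by omega) hu, rot_apply (u + 1) (u + 1 - 1) (by omega)]
    split_ifs <;> omega

/-- for `0 < k ≤ n(n-1)/2`, with `j = min {s : s(s-1)/2 ≥ k}` and `a`
the smallest (in co-lex order) subexcedant sequence in `S(k,n)`, i.e. `a i = i - 1`
for `1 ≤ i ≤ j-1`, `a j = k - (j-1)(j-2)/2` and `a i = 0` for `i > j`, the
permutation `α = ψ(a)` with McMahon code `a` is an involution: `α⁻¹ = α`. -/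
theorem psi_of_colex_smallest_involution (n k j : ℕ) (a : ℕ → ℕ)
    (hk0 : 0 < k) (hkn : k ≤ n * (n - 1) / 2)
    (hj : j = sInf {s : ℕ | k ≤ s * (s - 1) / 2})
    (ha1 : ∀ i, 1 ≤ i → i ≤ j - 1 → a i = i - 1)
    (ha2 : a j = k - (j - 1) * (j - 2) / 2)
    (ha3 : ∀ i, j < i → a i = 0) :
    (psi n a)⁻¹ = psi n a := by
  have hjn : j ≤ n := by
    rw [hj]; exact Nat.sInf_le hkn
  have hmem : k ≤ j * (j - 1) / 2 := by
    have hne : {s : ℕ | k ≤ s * (s - 1) / 2}.Nonempty := ⟨n, hkn⟩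
    have := Nat.sInf_mem hne
    rw [← hj] at this
    exact this
  have hj2 : 2 ≤ j := by
    by_contra h
    rcases (by omega : j = 0 ∨ j = 1) with rfl | rfl <;> simp at hmem <;> omega
  obtain ⟨p, rfl⟩ : ∃ p, j = p + 2 := ⟨j - 2, by omega⟩
  have e1 : (p + 2 - 1) = p + 1 := by omega
  have e2 : (p + 2 - 2) = p := by omega
  rw [e1] at hmem
  rw [e1, e2] at ha2
  have hnot : ¬ k ≤ (p + 1) * p / 2 := by
    have h1 : p + 1 < sInf {s : ℕ | k ≤ s * (s - 1) / 2} := by omega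
    have := Nat.notMem_of_lt_sInf h1
    simpa using this
  have hdiv : (p + 2) * (p + 1) / 2 = (p + 1) * p / 2 + (p + 1) := by
    have h1 : (p + 2) * (p + 1) = (p + 1) * p + (p + 1) * 2 := by ring
    rw [h1, Nat.add_mul_div_right _ _ (by norm_num : (0:ℕ) < 2)]
  have hm1 : 1 ≤ a (p + 2) := by omega
  have hm2 : a (p + 2) ≤ p + 1 := by omega
  have hq : psi (p + 2) a = rot (p + 2) (a (p + 2)) * psi (p + 1) a := by
    simpa using psi_succ (p + 1) a
  have hrev := psi_rev a (p + 1) (fun i h1 h2 => ha1 i h1 (by omega)) (p + 1) le_rfl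
  have key : ∀ x, psi n a x = if 1 ≤ x ∧ x ≤ p + 2 - a (p + 2) - 1 then p + 2 - a (p + 2) - x
      else if p + 2 - a (p + 2) ≤ x ∧ x ≤ p + 2 then 2 * (p + 2) - a (p + 2) - x else x := by
    intro x
    rw [psi_eq_of_zero a (p + 2) ha3 n hjn, hq, Equiv.Perm.mul_apply, hrev,
      rot_apply (p + 2) (a (p + 2)) (by omega)]
    split_ifs <;> omega
  have hsq : psi n a * psi n a = 1 := by
    ext x
    simp only [Equiv.Perm.mul_apply, Equiv.Perm.coe_one, id_eq]
    rw [key, key]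
    split_ifs <;> omega
  exact (eq_inv_of_mul_eq_one_left hsq).symm
end
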